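/- Let 𝕋 = ℝ/ℤ be the circle group with its usual topology. There exists a subgroup H of G = 𝕋^ℕ (with the product topology) that is closed in G (hence compact), weakly controllable in G, but not controllable in G. -/

import Mathlib

/-- Projection of an element of the direct product `ℕ → M` to the coordinates
in `J`. -/
def proj {M : Type*} (J : Set ℕ) (g : ℕ → M) : J → M :=
  fun j => g j

/-- A subgroup `H` of the direct product `G = M^ℕ` is *controllable* in `G` if
`p_J(H) = p_J(H ∩ ⊕_{n ∈ ℕ} M)` for every finite `J ⊆ ℕ`. -/
def Controllable {M : Type*} [AddCommGroup M] (H : AddSubgroup (ℕ → M)) : Prop :=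
  ∀ J : Set ℕ, J.Finite →
    proj J '' (H : Set (ℕ → M)) =
      proj J '' ((H : Set (ℕ → M)) ∩ {g | {n | g n ≠ 0}.Finite})

/-- A subgroup `H` of the direct product `G = M^ℕ` of a topological abelian
group is *weakly controllable* in `G` if `H ∩ ⊕_{n ∈ ℕ} M` is dense in `H`
(with respect to the Tychonoff product topology). -/
def WeaklyControllable {M : Type*} [AddCommGroup M] [TopologicalSpace M]
    (H : AddSubgroup (ℕ → M)) : Prop :=
  (H : Set (ℕ → M)) ⊆ closure ((H : Set (ℕ → M)) ∩ {g | {n | g n ≠ 0}.Finite})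


noncomputable section

namespace CircleCode

abbrev T := AddCircle (1 : ℝ)

/-- The map `x ↦ (2^n • x)ₙ` as an additive group hom. -/
def phi : T →+ (ℕ → T) where
  toFun x := fun n => (2 ^ n : ℤ) • x
  map_zero' := by funext n; simp
  map_add' x y := by funext n; simp [smul_add]

lemma phi_continuous : Continuous (phi : T → ℕ → T) :=
  continuous_pi fun n => continuous_zsmul _

/-- Dyadic rationals are dense in ℝ. -/
lemma dense_dyadic : Dense {r : ℝ | ∃ (m : ℤ) (k : ℕ), r = m / 2 ^ k} := by
  rw [dense_iff_exists_between]
  intro a b hab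
  obtain ⟨k, hk⟩ := pow_unbounded_of_one_lt (b - a)⁻¹ (one_lt_two (α := ℝ))
  have h2k : (0:ℝ) < 2 ^ k := by positivity
  have hlt : (1:ℝ) / 2 ^ k < b - a := by
    rw [div_lt_iff₀ h2k]
    have hba : 0 < b - a := sub_pos.mpr hab
    calc (1:ℝ) = (b - a) * (b - a)⁻¹ := by field_simp
    _ < (b - a) * 2 ^ k := by
        exact mul_lt_mul_of_pos_left hk hba
  refine ⟨(⌊2 ^ k * a⌋ + 1) / 2 ^ k, ⟨⌊2 ^ k * a⌋ + 1, k, by push_cast; ring⟩, ?_, ?_⟩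
  · rw [lt_div_iff₀ h2k]
    have := Int.lt_floor_add_one (2 ^ k * a)
    push_cast
    linarith
  · rw [div_lt_iff₀ h2k]
    have h1 : (⌊2 ^ k * a⌋ : ℝ) ≤ 2 ^ k * a := Int.floor_le _
    have h2 : (1:ℝ) / 2 ^ k * 2 ^ k < (b - a) * 2 ^ k :=
      mul_lt_mul_of_pos_right hlt h2k
    rw [div_mul_cancel₀] at h2
    · push_cast; nlinarith
    · positivity

/-- Torsion dyadic points are dense in the circle. -/
lemma dense_torsion : Dense {x : T | ∃ k : ℕ, (2 ^ k : ℤ) • x = 0} := by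
  have hsub : (fun r : ℝ => (r : T)) '' {r : ℝ | ∃ (m : ℤ) (k : ℕ), r = m / 2 ^ k}
      ⊆ {x : T | ∃ k : ℕ, (2 ^ k : ℤ) • x = 0} := by
    rintro _ ⟨r, ⟨m, k, rfl⟩, rfl⟩
    refine ⟨k, ?_⟩
    have : ((2 ^ k : ℤ) • ((m : ℝ) / 2 ^ k) : ℝ) = (m : ℝ) := by
      rw [zsmul_eq_mul]; push_cast; field_simp
    show (((2 ^ k : ℤ) • ((m : ℝ) / 2 ^ k) : ℝ) : T) = 0
    rw [this, AddCircle.coe_eq_zero_iff]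
    exact ⟨m, by simp⟩
  refine Dense.mono hsub ?_
  have hc : Continuous (fun r : ℝ => (r : T)) := continuous_quotient_mk'
  have hs : Function.Surjective (fun r : ℝ => (r : T)) := Quotient.mk''_surjective
  have key : closure ((fun r : ℝ => (r : T)) '' {r : ℝ | ∃ (m : ℤ) (k : ℕ), r = m / 2 ^ k}) = Set.univ := by
    apply Set.eq_univ_of_univ_subset
    calc Set.univ = (fun r : ℝ => (r : T)) '' closure {r : ℝ | ∃ (m : ℤ) (k : ℕ), r = m / 2 ^ k} := by
          rw [dense_dyadic.closure_eq, Set.image_univ, hs.range_eq]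
    _ ⊆ closure ((fun r : ℝ => (r : T)) '' {r : ℝ | ∃ (m : ℤ) (k : ℕ), r = m / 2 ^ k}) :=
          image_closure_subset_closure_image hc
  exact dense_iff_closure_eq.mpr key

theorem main :
    ∃ H : AddSubgroup (ℕ → AddCircle (1 : ℝ)),
      IsClosed (H : Set (ℕ → AddCircle (1 : ℝ))) ∧
      IsCompact (H : Set (ℕ → AddCircle (1 : ℝ))) ∧
      WeaklyControllable H ∧ ¬ Controllable H := by
  haveI : Fact ((0:ℝ) < 1) := ⟨one_pos⟩
  refine ⟨phi.range, ?_, ?_, ?_, ?_⟩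
  case _ =>
    have : (phi.range : Set (ℕ → T)) = Set.range phi := rfl
    rw [this]
    exact (isCompact_range phi_continuous).isClosed
  case _ =>
    have : (phi.range : Set (ℕ → T)) = Set.range phi := rfl
    rw [this]
    exact isCompact_range phi_continuous
  case _ =>
    -- weak controllability
    intro g hg
    have hsub : phi '' {x : T | ∃ k : ℕ, (2 ^ k : ℤ) • x = 0}
        ⊆ (phi.range : Set (ℕ → T)) ∩ {g | {n | g n ≠ 0}.Finite} := by
      rintro _ ⟨x, ⟨k, hk⟩, rfl⟩
      refine ⟨⟨x, rfl⟩, ?_⟩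
      refine Set.Finite.subset (Set.finite_Iio k) ?_
      intro n hn
      by_contra hnk
      simp only [Set.mem_Iio, not_lt] at hnk
      apply hn
      show (2 ^ n : ℤ) • x = 0
      have : (2 ^ n : ℤ) = 2 ^ (n - k) * 2 ^ k := by
        rw [← pow_add]; congr 1; omega
      rw [this, mul_smul, hk, smul_zero]
    obtain ⟨x, rfl⟩ := hg
    have hx : x ∈ closure {x : T | ∃ k : ℕ, (2 ^ k : ℤ) • x = 0} := dense_torsion x
    exact closure_mono hsub
      (image_closure_subset_closure_image phi_continuous (Set.mem_image_of_mem _ hx))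
  case _ =>
    intro hcon
    have h := hcon {0} (Set.finite_singleton 0)
    set α : T := ((Real.sqrt 2 : ℝ) : T) with hα
    have hmem : proj {0} (phi α) ∈ proj ({0} : Set ℕ) '' (phi.range : Set (ℕ → T)) :=
      Set.mem_image_of_mem _ ⟨α, rfl⟩
    rw [h] at hmem
    obtain ⟨g, ⟨⟨x, hx⟩, hfin⟩, hproj⟩ := hmem
    -- g = phi x, finite support
    obtain ⟨N, hN⟩ := hfin.bddAbove
    have hzero : g (N + 1) = 0 := by
      by_contra hne
      exact absurd (hN hne) (by omega)
    have hx0 : g 0 = α := by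
      have := congrFun hproj (⟨0, rfl⟩ : ({0} : Set ℕ))
      simpa [proj, phi] using this
    have hxα : x = α := by
      have : g 0 = x := by rw [← hx]; simp [phi]
      rw [← this, hx0]
    rw [← hx, hxα] at hzero
    have hzero' : (2 ^ (N + 1) : ℤ) • α = 0 := hzero
    rw [hα] at hzero'
    have : (((2 ^ (N + 1) : ℤ) • (Real.sqrt 2) : ℝ) : T) = 0 := hzero'
    rw [AddCircle.coe_eq_zero_iff] at this
    obtain ⟨m, hm⟩ := this
    have hsqrt : Real.sqrt 2 = (m : ℝ) / 2 ^ (N + 1) := by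
      have h2 : ((2:ℝ) ^ (N + 1)) ≠ 0 := by positivity
      have : (m : ℝ) = 2 ^ (N + 1) * Real.sqrt 2 := by
        have h3 := hm
        push_cast [zsmul_eq_mul] at h3 ⊢
        linarith [h3]
      rw [this]; field_simp
    have : Real.sqrt 2 = ((m / 2 ^ (N + 1) : ℚ) : ℝ) := by
      rw [hsqrt]; push_cast; ring
    exact irrational_sqrt_two ⟨_, this.symm⟩

end CircleCode


theorem exists_closed_weaklyControllable_not_controllable_circle :
    ∃ H : AddSubgroup (ℕ → AddCircle (1 : ℝ)),
      IsClosed (H : Set (ℕ → AddCircle (1 : ℝ))) ∧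
      IsCompact (H : Set (ℕ → AddCircle (1 : ℝ))) ∧
      WeaklyControllable H ∧ ¬ Controllable H := by
  exact CircleCode.main
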